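/- Fix λ > 0 and define the bridge variance V(t) = 2·λ· sinh(θ̄_{0:t})· sinh(θ̄_{t:T}) / sinh(θ̄_{0:T}). Then V(0) = 0, V(T) = 0, and for every t ∈ [0, T) the function V satisfies the ordinary differential equation V′(t) = −2·θ(t)·coth(θ̄_{t:T})·V(t) + 2·λ·θ(t), which is the variance evolution equation of the residual diffusion bridge. -/

import Mathlib

/-- For a continuous, positive schedule `θ` on `[0, T]` and fixed `λ > 0`, the bridge
variance `V(t) = 2·λ·sinh(θ̄_{0:t})·sinh(θ̄_{t:T}) / sinh(θ̄_{0:T})` (with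
`θ̄_{s:t} = ∫_s^t θ(z) dz`) satisfies `V(0) = 0`, `V(T) = 0`, and for every
`t ∈ [0, T)` the ODE `V′(t) = −2·θ(t)·coth(θ̄_{t:T})·V(t) + 2·λ·θ(t)`, where
`coth a = cosh a / sinh a`. -/
theorem bridge_variance_ode (T : ℝ) (hT : 0 < T) (θ : ℝ → ℝ) (hθc : Continuous θ)
    (hθpos : ∀ z ∈ Set.Icc (0:ℝ) T, 0 < θ z) (lam : ℝ) (hlam : 0 < lam) (V : ℝ → ℝ)
    (hV : ∀ t, V t = 2 * lam * Real.sinh (∫ z in (0:ℝ)..t, θ z)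
        * Real.sinh (∫ z in t..T, θ z) / Real.sinh (∫ z in (0:ℝ)..T, θ z)) :
    V 0 = 0 ∧ V T = 0 ∧
      ∀ t ∈ Set.Ico (0:ℝ) T,
        HasDerivAt V
          (-2 * θ t * (Real.cosh (∫ z in t..T, θ z) / Real.sinh (∫ z in t..T, θ z))
              * V t + 2 * lam * θ t) t := by
  have hint : ∀ a b : ℝ, IntervalIntegrable θ MeasureTheory.volume a b :=
    fun a b => hθc.intervalIntegrable a b
  set S : ℝ := ∫ z in (0:ℝ)..T, θ z with hSdef
  have hSpos : 0 < S := by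
    apply intervalIntegral.intervalIntegral_pos_of_pos_on (hint 0 T) _ hT
    intro x hx
    exact hθpos x ⟨hx.1.le, hx.2.le⟩
  have hsinhS : Real.sinh S ≠ 0 := ne_of_gt (by positivity)
  refine ⟨by simp [hV 0], by simp [hV T], ?_⟩
  intro t ht
  have hBpos : 0 < ∫ z in t..T, θ z := by
    apply intervalIntegral.intervalIntegral_pos_of_pos_on (hint t T) _ ht.2
    intro x hx
    exact hθpos x ⟨le_trans ht.1 hx.1.le, hx.2.le⟩
  have hsinhB : Real.sinh (∫ z in t..T, θ z) ≠ 0 := ne_of_gt (by positivity)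
  have hA : HasDerivAt (fun s => ∫ z in (0:ℝ)..s, θ z) (θ t) t :=
    intervalIntegral.integral_hasDerivAt_right (hint 0 t)
      (hθc.stronglyMeasurableAtFilter _ _) hθc.continuousAt
  have hsplit : ∀ s : ℝ, (∫ z in s..T, θ z) = S - ∫ z in (0:ℝ)..s, θ z := by
    intro s
    have := intervalIntegral.integral_add_adjacent_intervals (hint 0 s) (hint s T)
    linarith [this]
  have hB : HasDerivAt (fun s => ∫ z in s..T, θ z) (-θ t) t := by
    have : HasDerivAt (fun s => S - ∫ z in (0:ℝ)..s, θ z) (-θ t) t := by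
      have h := (hasDerivAt_const t S).sub hA
      rw [zero_sub] at h
      exact h
    exact this.congr_of_eventuallyEq (Filter.Eventually.of_forall fun s => hsplit s)
  have hVfun : V = fun s => 2 * lam * Real.sinh (∫ z in (0:ℝ)..s, θ z)
      * Real.sinh (∫ z in s..T, θ z) / Real.sinh S := funext hV
  have hD := ((hA.sinh.const_mul (2 * lam)).mul hB.sinh).div_const (Real.sinh S)
  simp only [Pi.mul_apply] at hD
  rw [← hVfun] at hD
  refine hD.congr_deriv ?_
  rw [hV t]
  have hadd : S = (∫ z in (0:ℝ)..t, θ z) + ∫ z in t..T, θ z := by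
    have := hsplit t; linarith
  have hs2 : Real.sinh (∫ z in (0:ℝ)..t, θ z) * Real.cosh (∫ z in t..T, θ z)
      + Real.cosh (∫ z in (0:ℝ)..t, θ z) * Real.sinh (∫ z in t..T, θ z) ≠ 0 := by
    rw [← Real.sinh_add, ← hadd]; exact hsinhS
  rw [hadd, Real.sinh_add]
  field_simp
  ring
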